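/- arXiv:2112.13812 — 5 statements merged into one kernel-verified Lean document; each statement's English description precedes it below -/
import Mathlib

section
/- There exists a unique φ_* ∈ (0,1) such that F_log'(φ_*) = 0, where F_log'(s) = (θ/2)[ln(1+s) - ln(1-s)] - θ_c s is the derivative of F_log. Moreover, this positive root satisfies (1 - θ/θ_c)^{1/2} < φ_* < 1. -/
/-- The first derivative of the logarithmic (Flory–Huggins) potential
`F_log(s) = (θ/2)[(1+s)ln(1+s) + (1-s)ln(1-s)] - (θ_c/2)s²`, namely
`F_log'(s) = (θ/2)[ln(1+s) - ln(1-s)] - θ_c s`. -/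
noncomputable def FlogD (θ θc s : ℝ) : ℝ :=
  θ / 2 * (Real.log (1 + s) - Real.log (1 - s)) - θc * s

/-- There exists a unique `φ_* ∈ (0,1)` with `F_log'(φ_*) = 0`, and this positive root
satisfies `(1 - θ/θ_c)^{1/2} < φ_* < 1`. -/
theorem stmt1 (θ θc : ℝ) (hθ : 0 < θ) (hθc : θ < θc) :
    ∃ p : ℝ, p ∈ Set.Ioo (0 : ℝ) 1 ∧ FlogD θ θc p = 0 ∧
      Real.sqrt (1 - θ / θc) < p ∧
      ∀ q ∈ Set.Ioo (0 : ℝ) 1, FlogD θ θc q = 0 → q = p := by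
  have hθc0 : 0 < θc := hθ.trans hθc
  set g : ℝ → ℝ := FlogD θ θc with hgdef
  have hratio : 0 < θ / θc := div_pos hθ hθc0
  have hratio1 : θ / θc < 1 := (div_lt_one hθc0).2 hθc
  set a : ℝ := Real.sqrt (1 - θ / θc) with ha
  have ha2 : a ^ 2 = 1 - θ / θc := Real.sq_sqrt (by linarith)
  have ha0 : 0 < a := Real.sqrt_pos.2 (by linarith)
  have ha1 : a < 1 := by nlinarith [ha2, ha0]
  -- derivative of g
  have hderiv : ∀ s : ℝ, s ∈ Set.Ioo (-1 : ℝ) 1 →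
      HasDerivAt g (θ / (1 - s ^ 2) - θc) s := by
    rintro s ⟨hs1, hs2⟩
    have h1 : (0 : ℝ) < 1 + s := by linarith
    have h2 : (0 : ℝ) < 1 - s := by linarith
    have d1 : HasDerivAt (fun x : ℝ => Real.log (1 + x)) (1 / (1 + s)) s := by
      have := (Real.hasDerivAt_log h1.ne').comp s ((hasDerivAt_id s).const_add 1)
      simpa [one_div, Function.comp_def] using this
    have d2 : HasDerivAt (fun x : ℝ => Real.log (1 - x)) (-(1 / (1 - s))) s := by
      have := (Real.hasDerivAt_log h2.ne').comp s ((hasDerivAt_id s).const_sub 1)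
      simpa [one_div, Function.comp_def] using this
    have d3 : HasDerivAt (fun x : ℝ =>
        θ / 2 * (Real.log (1 + x) - Real.log (1 - x)) - θc * x)
        (θ / 2 * (1 / (1 + s) - -(1 / (1 - s))) - θc * 1) s :=
      ((d1.sub d2).const_mul (θ / 2)).sub ((hasDerivAt_id s).const_mul θc)
    have heq : θ / 2 * (1 / (1 + s) - -(1 / (1 - s))) - θc * 1 = θ / (1 - s ^ 2) - θc := by
      have h3 : (1 : ℝ) - s ^ 2 ≠ 0 := by nlinarith
      field_simp
      ring
    rw [← heq]
    exact d3
  have hg0 : g 0 = 0 := by simp [hgdef, FlogD]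
  -- g strictly decreasing on [0, a]
  have hanti : StrictAntiOn g (Set.Icc 0 a) := by
    apply strictAntiOn_of_deriv_neg (convex_Icc 0 a)
    · intro x hx
      exact (hderiv x ⟨by linarith [hx.1], by linarith [hx.2]⟩).continuousAt.continuousWithinAt
    · intro x hx
      rw [interior_Icc] at hx
      have hx1 : (-1 : ℝ) < x := by linarith [hx.1]
      have hx2 : x < 1 := by linarith [hx.2]
      rw [(hderiv x ⟨hx1, hx2⟩).deriv]
      have hxa : x ^ 2 < a ^ 2 := by nlinarith [hx.1, hx.2, ha0]
      have h1s : θ / θc < 1 - x ^ 2 := by nlinarith [ha2]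
      have h1s0 : (0 : ℝ) < 1 - x ^ 2 := lt_trans hratio h1s
      have hkey : θc * (θ / θc) < θc * (1 - x ^ 2) := mul_lt_mul_of_pos_left h1s hθc0
      have hθeq : θc * (θ / θc) = θ := by field_simp
      have : θ / (1 - x ^ 2) < θc := by
        rw [div_lt_iff₀ h1s0]
        linarith
      linarith
  -- g strictly increasing on [a, 1)
  have hmono : StrictMonoOn g (Set.Ico a 1) := by
    apply strictMonoOn_of_deriv_pos (convex_Ico a 1)
    · intro x hx
      exact (hderiv x ⟨by linarith [hx.1], hx.2⟩).continuousAt.continuousWithinAt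
    · intro x hx
      rw [interior_Ico] at hx
      have hx1 : (-1 : ℝ) < x := by linarith [hx.1]
      rw [(hderiv x ⟨hx1, hx.2⟩).deriv]
      have hxa : a ^ 2 < x ^ 2 := by nlinarith [hx.1, ha0]
      have h1s : 1 - x ^ 2 < θ / θc := by nlinarith [ha2]
      have h1s0 : (0 : ℝ) < 1 - x ^ 2 := by nlinarith [hx.2, hx.1, ha0]
      have hkey : θc * (1 - x ^ 2) < θc * (θ / θc) := mul_lt_mul_of_pos_left h1s hθc0
      have hθeq : θc * (θ / θc) = θ := by field_simp
      have : θc < θ / (1 - x ^ 2) := by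
        rw [lt_div_iff₀ h1s0]
        linarith
      linarith
  have hga : g a < 0 := by
    have := hanti (Set.left_mem_Icc.2 ha0.le) (Set.right_mem_Icc.2 ha0.le) ha0
    rwa [hg0] at this
  -- g → ∞ as s → 1⁻
  have hmap : Filter.Tendsto (fun s : ℝ => 1 - s) (nhdsWithin 1 (Set.Iio 1))
      (nhdsWithin 0 (Set.Ioi 0)) := by
    apply tendsto_nhdsWithin_of_tendsto_nhds_of_eventually_within
    · have h : Filter.Tendsto (fun s : ℝ => 1 - s) (nhds 1) (nhds ((1 : ℝ) - 1)) :=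
        (Continuous.tendsto (by continuity : Continuous fun s : ℝ => 1 - s) 1)
      have h' : Filter.Tendsto (fun s : ℝ => 1 - s) (nhds 1) (nhds 0) := by
        simpa using h
      exact h'.mono_left nhdsWithin_le_nhds
    · filter_upwards [self_mem_nhdsWithin] with x hx
      simp only [Set.mem_Iio] at hx
      simpa using hx
  have hlog : Filter.Tendsto (fun s : ℝ => Real.log (1 - s)) (nhdsWithin 1 (Set.Iio 1))
      Filter.atBot := Real.tendsto_log_nhdsGT_zero.comp hmap
  have htop : Filter.Tendsto g (nhdsWithin 1 (Set.Iio 1)) Filter.atTop := by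
    have h1 : Filter.Tendsto (fun s : ℝ => θ / 2 * Real.log (1 + s) - θc * s)
        (nhdsWithin 1 (Set.Iio 1)) (nhds (θ / 2 * Real.log (1 + 1) - θc * 1)) := by
      apply Filter.Tendsto.mono_left _ nhdsWithin_le_nhds
      have hc : ContinuousAt (fun s : ℝ => θ / 2 * Real.log (1 + s) - θc * s) 1 := by
        apply ContinuousAt.sub
        · exact ((Real.continuousAt_log (by norm_num : (1:ℝ) + 1 ≠ 0)).comp
            ((continuous_const.add continuous_id).continuousAt)).const_smul (θ / 2) |>.congr
            (by filter_upwards with x; simp [smul_eq_mul])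
        · exact (continuous_const.mul continuous_id).continuousAt
      exact hc
    have h2 : Filter.Tendsto (fun s : ℝ => θ / 2 * (-(Real.log (1 - s))))
        (nhdsWithin 1 (Set.Iio 1)) Filter.atTop := by
      have hneg : Filter.Tendsto (fun s : ℝ => -(Real.log (1 - s)))
          (nhdsWithin 1 (Set.Iio 1)) Filter.atTop := Filter.tendsto_neg_atBot_atTop.comp hlog
      exact hneg.const_mul_atTop (by positivity)
    have := h1.add_atTop h2
    apply this.congr
    intro s
    simp only [hgdef, FlogD]
    ring
  -- find b ∈ (a,1) with g b > 0
  have hev : ∀ᶠ s in nhdsWithin 1 (Set.Iio 1), 0 < g s ∧ a < s ∧ s < 1 := by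
    filter_upwards [htop.eventually_gt_atTop 0,
      eventually_nhdsWithin_of_eventually_nhds (eventually_gt_nhds ha1),
      self_mem_nhdsWithin] with s h1 h2 h3
    exact ⟨h1, h2, h3⟩
  obtain ⟨b, hgb, hab, hb1⟩ := hev.exists
  -- IVT on [a, b]
  have hcont : ContinuousOn g (Set.Icc a b) := fun x hx =>
    (hderiv x ⟨by linarith [hx.1], by linarith [hx.2]⟩).continuousAt.continuousWithinAt
  have hivt := intermediate_value_Ioo hab.le hcont
  have h0mem : (0 : ℝ) ∈ Set.Ioo (g a) (g b) := ⟨hga, hgb⟩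
  obtain ⟨p, hp, hgp⟩ := hivt h0mem
  refine ⟨p, ⟨ha0.trans hp.1, hp.2.trans hb1⟩, hgp, hp.1, ?_⟩
  -- uniqueness
  intro q hq hgq
  have hqa : a < q := by
    by_contra hle
    push_neg at hle
    have := hanti (Set.left_mem_Icc.2 ha0.le) ⟨hq.1.le, hle⟩ hq.1
    rw [hg0] at this
    rw [hgq] at this
    exact lt_irrefl 0 this
  have hpmem : p ∈ Set.Ico a 1 := ⟨hp.1.le, hp.2.trans hb1⟩
  have hqmem : q ∈ Set.Ico a 1 := ⟨hqa.le, hq.2⟩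
  exact hmono.injOn hqmem hpmem (by rw [hgq, hgp])
end

section
/- Let γ ≥ 1 be a real number and let h : [-1,1] → ℝ be continuously differentiable with h(1) ≠ 0 and h(-1) ≠ 0. Define f(s) = h(s)/(1-s²)^γ for s ∈ (-1,1). Then there exists a constant C > 0 such that |f'(s)| ≤ C(|f(s)|² + 1) for all s ∈ (-1,1); that is, singular nonlinearities of the form h(s)/(1-s²)^γ with γ ≥ 1 satisfy the growth condition |F''(s)| ≤ C(|F'(s)|² + 1) used for the three-dimensional strict separation property. -/
open Set Real

/-- Singular nonlinearities of the form `f(s) = h(s)/(1-s²)^γ` with `γ ≥ 1` and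
`h ∈ C¹([-1,1])`, `h(±1) ≠ 0`, satisfy the growth condition `|f'(s)| ≤ C(|f(s)|² + 1)`
on `(-1,1)` (the condition `|F''| ≤ C(|F'|² + 1)` used for the three-dimensional strict
separation property, with `f` playing the role of `F'`). Here `(1-s²)^γ` denotes the
real power of the positive number `1-s²`. -/
theorem stmt9 (γ : ℝ) (hγ : 1 ≤ γ) (h : ℝ → ℝ)
    (hh : ContDiffOn ℝ 1 h (Set.Icc (-1 : ℝ) 1))
    (h1 : h 1 ≠ 0) (hm1 : h (-1) ≠ 0) :
    ∃ C : ℝ, 0 < C ∧ ∀ s ∈ Set.Ioo (-1 : ℝ) 1,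
      |deriv (fun t : ℝ => h t / (1 - t ^ 2) ^ γ) s| ≤
        C * (|h s / (1 - s ^ 2) ^ γ| ^ 2 + 1) := by
  have hIcc : UniqueDiffOn ℝ (Icc (-1:ℝ) 1) := uniqueDiffOn_Icc (by norm_num)
  set D := derivWithin h (Icc (-1:ℝ) 1) with hDdef
  have hDc : ContinuousOn D (Icc (-1:ℝ) 1) := hh.continuousOn_derivWithin hIcc le_rfl
  have hcont : ContinuousOn h (Icc (-1:ℝ) 1) := hh.continuousOn
  obtain ⟨M1, hM1⟩ := (isCompact_Icc).exists_bound_of_continuousOn hcont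
  obtain ⟨M2, hM2⟩ := (isCompact_Icc).exists_bound_of_continuousOn hDc
  have hM1nn : 0 ≤ M1 := le_trans (norm_nonneg _) (hM1 1 (by norm_num))
  have hM2nn : 0 ≤ M2 := le_trans (norm_nonneg _) (hM2 1 (by norm_num))
  set m : ℝ := min |h 1| |h (-1)| / 2 with hmdef
  have h1pos : 0 < |h 1| := abs_pos.mpr h1
  have hm1pos : 0 < |h (-1)| := abs_pos.mpr hm1
  have hmpos : 0 < m := by
    rw [hmdef]; exact div_pos (lt_min h1pos hm1pos) two_pos
  clear_value m
  -- continuity at endpoints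
  have hc1 : ContinuousWithinAt h (Icc (-1:ℝ) 1) 1 := hcont 1 (by norm_num)
  rw [Metric.continuousWithinAt_iff] at hc1
  obtain ⟨δ1, hδ1pos, H1⟩ := hc1 m hmpos
  have hc2 : ContinuousWithinAt h (Icc (-1:ℝ) 1) (-1) := hcont (-1) (by norm_num)
  rw [Metric.continuousWithinAt_iff] at hc2
  obtain ⟨δ2, hδ2pos, H2⟩ := hc2 m hmpos
  set δ : ℝ := min (min δ1 δ2) 1 / 2 with hδdef
  have hδpos : 0 < δ := by
    rw [hδdef]; positivity
  have hδlt1 : δ < 1 := by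
    rw [hδdef]
    nlinarith [min_le_right (min δ1 δ2) 1]
  have hδδ1 : δ ≤ δ1 := by
    rw [hδdef]; nlinarith [min_le_left (min δ1 δ2) 1, min_le_left δ1 δ2, lt_min hδ1pos hδ2pos]
  have hδδ2 : δ ≤ δ2 := by
    rw [hδdef]; nlinarith [min_le_left (min δ1 δ2) 1, min_le_right δ1 δ2, lt_min hδ1pos hδ2pos]
  clear_value δ
  -- lower bound for |h| near endpoints
  have hlow : ∀ s ∈ Ioo (-1:ℝ) 1, 1 - δ < |s| → m ≤ |h s| := by
    intro s hs habs
    have hsI : s ∈ Icc (-1:ℝ) 1 := ⟨hs.1.le, hs.2.le⟩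
    have h2m : 2 * m ≤ min |h 1| |h (-1)| := by rw [hmdef]; ring_nf; linarith
    rcases le_or_gt 0 s with hs0 | hs0
    · have habs' : |s| = s := abs_of_nonneg hs0
      have hds : dist s 1 < δ1 := by
        rw [Real.dist_eq, abs_of_nonpos (by linarith [hs.2.le])]
        linarith
      have hd : |h s - h 1| < m := by
        have := H1 hsI hds; rwa [Real.dist_eq] at this
      have : |h 1| - m ≤ |h s| := by
        have h2 := abs_sub_abs_le_abs_sub (h 1) (h s)
        rw [abs_sub_comm] at h2
        linarith
      have hmin : min |h 1| |h (-1)| ≤ |h 1| := min_le_left _ _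
      linarith
    · have habs' : |s| = -s := abs_of_neg hs0
      have hds : dist s (-1) < δ2 := by
        rw [Real.dist_eq, abs_of_nonneg (by linarith [hs.1.le])]
        linarith
      have hd : |h s - h (-1)| < m := by
        have := H2 hsI hds; rwa [Real.dist_eq] at this
      have : |h (-1)| - m ≤ |h s| := by
        have h2 := abs_sub_abs_le_abs_sub (h (-1)) (h s)
        rw [abs_sub_comm] at h2
        linarith
      have hmin : min |h 1| |h (-1)| ≤ |h (-1)| := min_le_right _ _
      linarith
  set ε : ℝ := 1 - (1 - δ)^2 with hεdef
  have hεpos : 0 < ε := by rw [hεdef]; nlinarith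
  clear_value ε
  set K1 : ℝ := M2 + 2 * γ * M1 with hK1def
  have hK1nn : 0 ≤ K1 := by rw [hK1def]; nlinarith
  clear_value K1
  set K2 : ℝ := ε ^ (-(γ+1)) with hK2def
  have hK2nn : 0 ≤ K2 := by rw [hK2def]; positivity
  clear_value K2
  have hCnn : (0:ℝ) ≤ K1 * K2 + K1 / m^2 + 1 := by positivity
  refine ⟨K1 * K2 + K1 / m^2 + 1, by positivity, ?_⟩
  intro s hs
  have hs0 : (0:ℝ) < 1 - s^2 := by nlinarith [hs.1, hs.2]
  have hsle1 : 1 - s^2 ≤ 1 := by nlinarith [sq_nonneg s]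
  have hsI : s ∈ Icc (-1:ℝ) 1 := ⟨hs.1.le, hs.2.le⟩
  have hmem : Icc (-1:ℝ) 1 ∈ nhds s := Icc_mem_nhds hs.1 hs.2
  have hdh : HasDerivAt h (D s) s :=
    ((hh.differentiableOn one_ne_zero s hsI).hasDerivWithinAt).hasDerivAt hmem
  have hu : HasDerivAt (fun t : ℝ => 1 - t ^ 2) (-(2*s)) s := by
    simpa using ((hasDerivAt_pow 2 s).const_sub 1)
  have hupow : HasDerivAt (fun t : ℝ => (1 - t^2) ^ γ) (-(2*s) * γ * (1 - s^2) ^ (γ - 1)) s :=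
    hu.rpow_const (Or.inl hs0.ne')
  have hne : (1 - s^2) ^ γ ≠ 0 := (Real.rpow_pos_of_pos hs0 γ).ne'
  have hf : HasDerivAt (fun t : ℝ => h t / (1 - t^2)^γ)
      ((D s * (1 - s^2)^γ - h s * (-(2*s) * γ * (1 - s^2)^(γ-1))) / ((1 - s^2)^γ)^2) s :=
    hdh.div hupow hne
  rw [hf.deriv]
  have hPgpos : (0:ℝ) < (1 - s^2)^γ := Real.rpow_pos_of_pos hs0 γ
  have hPg1pos : (0:ℝ) < (1 - s^2)^(γ-1) := Real.rpow_pos_of_pos hs0 _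
  have hDsb : |D s| ≤ M2 := hM2 s hsI
  have hhsb : |h s| ≤ M1 := hM1 s hsI
  have hsabs : |s| ≤ 1 := by rw [abs_le]; exact ⟨hs.1.le, hs.2.le⟩
  have hP1 : (1 - s^2)^γ ≤ (1 - s^2)^(γ-1) :=
    Real.rpow_le_rpow_of_exponent_ge hs0 hsle1 (by linarith)
  -- numerator bound
  have t1 : |D s * (1 - s^2)^γ| ≤ M2 * (1 - s^2)^(γ-1) := by
    rw [abs_mul, abs_of_pos hPgpos]
    exact mul_le_mul hDsb hP1 hPgpos.le hM2nn
  have e2 : |h s * (-(2*s) * γ * (1 - s^2)^(γ-1))|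
      = |h s| * (2 * |s|) * γ * (1 - s^2)^(γ-1) := by
    rw [abs_mul, abs_mul, abs_mul, abs_neg, abs_mul,
      abs_of_nonneg (by linarith : (0:ℝ) ≤ γ), abs_of_pos hPg1pos, abs_two]
    ring
  have t2 : |h s * (-(2*s) * γ * (1 - s^2)^(γ-1))| ≤ M1 * 2 * γ * (1 - s^2)^(γ-1) := by
    rw [e2]
    have ha : |h s| * (2*|s|) ≤ M1 * 2 :=
      mul_le_mul hhsb (by linarith) (by positivity) hM1nn
    have hb' := mul_le_mul_of_nonneg_right ha (by linarith : (0:ℝ) ≤ γ)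
    exact mul_le_mul_of_nonneg_right hb' hPg1pos.le
  have hnum : |D s * (1 - s^2)^γ - h s * (-(2*s) * γ * (1 - s^2)^(γ-1))|
      ≤ K1 * (1 - s^2)^(γ-1) := by
    have habs : |D s * (1 - s^2)^γ - h s * (-(2*s) * γ * (1 - s^2)^(γ-1))|
        ≤ |D s * (1 - s^2)^γ| + |h s * (-(2*s) * γ * (1 - s^2)^(γ-1))| := by
      rw [sub_eq_add_neg]
      exact (abs_add_le _ _).trans (by rw [abs_neg])
    have hsum : M2 * (1 - s^2)^(γ-1) + M1 * 2 * γ * (1 - s^2)^(γ-1)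
        = K1 * (1 - s^2)^(γ-1) := by rw [hK1def]; ring
    linarith
  have hden : ((1 - s^2)^γ)^2 = (1 - s^2)^(2*γ) := by
    rw [← Real.rpow_natCast ((1-s^2)^γ) 2, ← Real.rpow_mul hs0.le]
    norm_num [mul_comm]
  have hkey : |(D s * (1 - s^2)^γ - h s * (-(2*s) * γ * (1 - s^2)^(γ-1))) / ((1 - s^2)^γ)^2|
      ≤ K1 * (1 - s^2) ^ (-(γ+1)) := by
    rw [abs_div, abs_of_pos (by positivity : (0:ℝ) < ((1 - s^2)^γ)^2), hden,
      div_le_iff₀ (by positivity)]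
    calc |D s * (1 - s^2)^γ - h s * (-(2*s) * γ * (1 - s^2)^(γ-1))|
        ≤ K1 * (1 - s^2)^(γ-1) := hnum
      _ = K1 * (1 - s^2) ^ (-(γ+1)) * (1 - s^2)^(2*γ) := by
          rw [mul_assoc, ← Real.rpow_add hs0]
          ring_nf
  set X : ℝ := |h s / (1 - s ^ 2) ^ γ| ^ 2 with hXdef
  have hXnn : 0 ≤ X := by rw [hXdef]; positivity
  clear_value X
  rcases le_or_gt |s| (1 - δ) with hcase | hcase
  · -- interior case
    have hε : ε ≤ 1 - s^2 := by
      have h2 : |s|^2 ≤ (1-δ)^2 := pow_le_pow_left₀ (abs_nonneg s) hcase 2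
      have h3 : s^2 ≤ (1-δ)^2 := by rw [← sq_abs s]; exact h2
      rw [hεdef]; linarith
    have hKK : (1 - s^2) ^ (-(γ+1)) ≤ K2 := by
      rw [hK2def]
      exact Real.rpow_le_rpow_of_nonpos hεpos hε (by linarith)
    have hb : |(D s * (1 - s^2)^γ - h s * (-(2*s) * γ * (1 - s^2)^(γ-1))) / ((1 - s^2)^γ)^2|
        ≤ K1 * K2 := le_trans hkey (mul_le_mul_of_nonneg_left hKK hK1nn)
    have hq : 0 ≤ K1 / m^2 := by positivity
    have h1C : K1 * K2 ≤ (K1 * K2 + K1 / m^2 + 1) * (X + 1) :=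
      calc K1 * K2 ≤ K1 * K2 + K1 / m^2 + 1 := by linarith
        _ = (K1 * K2 + K1 / m^2 + 1) * 1 := (mul_one _).symm
        _ ≤ (K1 * K2 + K1 / m^2 + 1) * (X + 1) :=
            mul_le_mul_of_nonneg_left (by linarith) hCnn
    linarith
  · -- boundary case
    have hhm : m ≤ |h s| := hlow s hs hcase
    have hexp : (1 - s^2) ^ (-(γ+1)) ≤ (1 - s^2) ^ (-(2*γ)) :=
      Real.rpow_le_rpow_of_exponent_ge hs0 hsle1 (by linarith)
    have hm2 : m^2 ≤ (h s)^2 := by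
      have := pow_le_pow_left₀ hmpos.le hhm 2
      rwa [sq_abs] at this
    have hfsq : m^2 * ((1 - s^2)^(2*γ))⁻¹ ≤ X := by
      rw [hXdef]
      rw [sq_abs]
      rw [div_pow, hden, div_eq_mul_inv]
      exact mul_le_mul_of_nonneg_right hm2 (by positivity)
    have hinv : (1 - s^2) ^ (-(2*γ)) = ((1 - s^2)^(2*γ))⁻¹ := Real.rpow_neg hs0.le _
    have hb : |(D s * (1 - s^2)^γ - h s * (-(2*s) * γ * (1 - s^2)^(γ-1))) / ((1 - s^2)^γ)^2|
        ≤ K1 / m^2 * X := by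
      have h3 : K1 * (1 - s^2) ^ (-(2*γ)) ≤ K1 / m^2 * X := by
        rw [hinv]
        rw [div_mul_eq_mul_div, le_div_iff₀ (by positivity : (0:ℝ) < m^2)]
        calc K1 * ((1 - s^2)^(2*γ))⁻¹ * m^2 = K1 * (m^2 * ((1 - s^2)^(2*γ))⁻¹) := by ring
          _ ≤ K1 * X := mul_le_mul_of_nonneg_left hfsq hK1nn
      calc _ ≤ K1 * (1 - s^2) ^ (-(γ+1)) := hkey
        _ ≤ K1 * (1 - s^2) ^ (-(2*γ)) := mul_le_mul_of_nonneg_left hexp hK1nn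
        _ ≤ K1 / m^2 * X := h3
    have hq : 0 ≤ K1 * K2 := mul_nonneg hK1nn hK2nn
    have hq2 : 0 ≤ K1 / m^2 := by positivity
    have h1C : K1 / m^2 * X ≤ (K1 * K2 + K1 / m^2 + 1) * (X + 1) :=
      calc K1 / m^2 * X ≤ (K1 * K2 + K1 / m^2 + 1) * X :=
            mul_le_mul_of_nonneg_right (by linarith) hXnn
        _ ≤ (K1 * K2 + K1 / m^2 + 1) * (X + 1) :=
            mul_le_mul_of_nonneg_left (by linarith) hCnn
    linarith
end

section
/- Let l > 0, T > 0, Γ_s > 0, let F, G : ℝ → ℝ be continuously differentiable, and let φ : [0,l] × (0,T) → ℝ be such that φ, ∂_t φ, ∂_x φ, ∂_x² φ, ∂_t ∂_x φ = ∂_x ∂_t φ exist and are jointly continuous, and such that, writing μ := -∂_x² φ + F'(φ), also ∂_x μ and ∂_x² μ exist and are jointly continuous on [0,l] × (0,T). Assume ∂_t φ = ∂_x² μ on [0,l] × (0,T), with boundary conditions ∂_x μ(0,t) = ∂_x μ(l,t) = 0, (1/Γ_s) ∂_t φ(0,t) - ∂_x φ(0,t) + G'(φ(0,t)) = 0 and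 (1/Γ_s) ∂_t φ(l,t) + ∂_x φ(l,t) + G'(φ(l,t)) = 0 for all t ∈ (0,T). Then for every t ∈ (0,T) the total energy E(t) = ∫₀^l [(1/2)(∂_x φ(x,t))² + F(φ(x,t))] dx + G(φ(0,t)) + G(φ(l,t)) is differentiable in t with d/dt E(t) = -∫₀^l (∂_x μ(x,t))² dx - (1/Γ_s)[(∂_t φ(0,t))² + (∂_t φ(l,t))²]. -/
open Set

/-- Energy dissipation law for the one-dimensional Cahn–Hilliard equation `∂_t φ = ∂_x² μ`,
`μ = -∂_x² φ + F'(φ)` on `Ω = (0,l)` with no-flux condition `∂_x μ = 0` at `x = 0, l` and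
the Allen–Cahn type dynamic boundary condition `(1/Γ_s)∂_t φ + ∂_n φ + G'(φ) = 0` (the
outward normal derivative `∂_n` being `-∂_x` at `x = 0` and `+∂_x` at `x = l`): the total
free energy `E(t) = ∫₀^l (1/2)(∂_x φ)² + F(φ) dx + G(φ(0,t)) + G(φ(l,t))` satisfies
`E'(t) = -∫₀^l (∂_x μ)² dx - (1/Γ_s)[(∂_t φ(0,t))² + (∂_t φ(l,t))²]`.
Here `φt, φx, φxx, φtx, μx, μxx` denote `∂_t φ, ∂_x φ, ∂_x² φ, ∂_t ∂_x φ = ∂_x ∂_t φ,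
∂_x μ, ∂_x² μ`, all jointly continuous on `[0,l] × (0,T)`. -/
theorem stmt16 (l T Γs : ℝ) (hl : 0 < l) (hT : 0 < T) (hΓs : 0 < Γs)
    (F G : ℝ → ℝ) (hF : ContDiff ℝ 1 F) (hG : ContDiff ℝ 1 G)
    (φ φt φx φxx φtx μx μxx : ℝ → ℝ → ℝ)
    (hφt : ∀ x ∈ Icc (0 : ℝ) l, ∀ t ∈ Ioo (0 : ℝ) T,
      HasDerivAt (fun τ => φ x τ) (φt x t) t)
    (hφx : ∀ x ∈ Icc (0 : ℝ) l, ∀ t ∈ Ioo (0 : ℝ) T,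
      HasDerivAt (fun y => φ y t) (φx x t) x)
    (hφxx : ∀ x ∈ Icc (0 : ℝ) l, ∀ t ∈ Ioo (0 : ℝ) T,
      HasDerivAt (fun y => φx y t) (φxx x t) x)
    (hφtx : ∀ x ∈ Icc (0 : ℝ) l, ∀ t ∈ Ioo (0 : ℝ) T,
      HasDerivAt (fun τ => φx x τ) (φtx x t) t)
    (hφxt : ∀ x ∈ Icc (0 : ℝ) l, ∀ t ∈ Ioo (0 : ℝ) T,
      HasDerivAt (fun y => φt y t) (φtx x t) x)
    (hμx : ∀ x ∈ Icc (0 : ℝ) l, ∀ t ∈ Ioo (0 : ℝ) T,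
      HasDerivAt (fun y => -φxx y t + deriv F (φ y t)) (μx x t) x)
    (hμxx : ∀ x ∈ Icc (0 : ℝ) l, ∀ t ∈ Ioo (0 : ℝ) T,
      HasDerivAt (fun y => μx y t) (μxx x t) x)
    (hφc : ContinuousOn (fun p : ℝ × ℝ => φ p.1 p.2) (Icc (0 : ℝ) l ×ˢ Ioo (0 : ℝ) T))
    (hφtc : ContinuousOn (fun p : ℝ × ℝ => φt p.1 p.2) (Icc (0 : ℝ) l ×ˢ Ioo (0 : ℝ) T))
    (hφxc : ContinuousOn (fun p : ℝ × ℝ => φx p.1 p.2) (Icc (0 : ℝ) l ×ˢ Ioo (0 : ℝ) T))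
    (hφxxc : ContinuousOn (fun p : ℝ × ℝ => φxx p.1 p.2) (Icc (0 : ℝ) l ×ˢ Ioo (0 : ℝ) T))
    (hφtxc : ContinuousOn (fun p : ℝ × ℝ => φtx p.1 p.2) (Icc (0 : ℝ) l ×ˢ Ioo (0 : ℝ) T))
    (hμxc : ContinuousOn (fun p : ℝ × ℝ => μx p.1 p.2) (Icc (0 : ℝ) l ×ˢ Ioo (0 : ℝ) T))
    (hμxxc : ContinuousOn (fun p : ℝ × ℝ => μxx p.1 p.2) (Icc (0 : ℝ) l ×ˢ Ioo (0 : ℝ) T))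
    (hpde : ∀ x ∈ Icc (0 : ℝ) l, ∀ t ∈ Ioo (0 : ℝ) T, φt x t = μxx x t)
    (hbcflux : ∀ t ∈ Ioo (0 : ℝ) T, μx 0 t = 0 ∧ μx l t = 0)
    (hbcdyn0 : ∀ t ∈ Ioo (0 : ℝ) T,
      (1 / Γs) * φt 0 t - φx 0 t + deriv G (φ 0 t) = 0)
    (hbcdynl : ∀ t ∈ Ioo (0 : ℝ) T,
      (1 / Γs) * φt l t + φx l t + deriv G (φ l t) = 0) :
    ∀ t ∈ Ioo (0 : ℝ) T,
      HasDerivAt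
        (fun τ => (∫ x in (0 : ℝ)..l, (1 / 2 * (φx x τ) ^ 2 + F (φ x τ))) +
          G (φ 0 τ) + G (φ l τ))
        (-(∫ x in (0 : ℝ)..l, (μx x t) ^ 2) -
          (1 / Γs) * ((φt 0 t) ^ 2 + (φt l t) ^ 2)) t := by
  intro t ht
  obtain ⟨ht0, htT⟩ := ht
  have htI : t ∈ Ioo (0:ℝ) T := ⟨ht0, htT⟩
  have hIcc : uIcc (0:ℝ) l = Icc 0 l := uIcc_of_le hl.le
  have hIoc : uIoc (0:ℝ) l = Ioc 0 l := uIoc_of_le hl.le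
  have hFd : Continuous (deriv F) := hF.continuous_deriv le_rfl
  have hGd : Continuous (deriv G) := hG.continuous_deriv le_rfl
  have h0m : (0:ℝ) ∈ Icc (0:ℝ) l := left_mem_Icc.2 hl.le
  have hlm : l ∈ Icc (0:ℝ) l := right_mem_Icc.2 hl.le
  -- slice continuity
  have slice : ∀ {f : ℝ → ℝ → ℝ},
      ContinuousOn (fun p : ℝ × ℝ => f p.1 p.2) (Icc (0:ℝ) l ×ˢ Ioo (0:ℝ) T) →
      ∀ τ ∈ Ioo (0:ℝ) T, ContinuousOn (fun x => f x τ) (Icc (0:ℝ) l) := by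
    intro f hf τ hτ
    have hg : ContinuousOn (fun x : ℝ => ((x, τ) : ℝ × ℝ)) (Icc (0:ℝ) l) :=
      (continuous_id.prodMk continuous_const).continuousOn
    exact hf.comp hg (fun x hx => ⟨hx, hτ⟩)
  have hci : ∀ {f : ℝ → ℝ}, ContinuousOn f (Icc (0:ℝ) l) →
      IntervalIntegrable f MeasureTheory.volume 0 l := by
    intro f h
    exact h.intervalIntegrable_of_Icc hl.le
  -- epsilon
  set ε : ℝ := min t (T - t) / 2 with hεdef
  have hm : 0 < min t (T - t) := lt_min ht0 (by linarith)
  have hε : 0 < ε := by positivity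
  have hεt : ε < t := by
    have := min_le_left t (T - t); simp only [hεdef]; linarith
  have hεT : ε < T - t := by
    have := min_le_right t (T - t); simp only [hεdef]; linarith
  have hball : Metric.ball t ε ⊆ Ioo (0:ℝ) T := by
    rw [Real.ball_eq_Ioo]
    intro y hy
    exact ⟨by linarith [hy.1], by linarith [hy.2]⟩
  -- joint continuity of the t-derivative of the energy density
  have he'c : ContinuousOn
      (fun p : ℝ × ℝ => φx p.1 p.2 * φtx p.1 p.2 + deriv F (φ p.1 p.2) * φt p.1 p.2)
      (Icc (0:ℝ) l ×ˢ Ioo (0:ℝ) T) :=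
    (hφxc.mul hφtxc).add ((hFd.comp_continuousOn hφc).mul hφtc)
  -- compact bound
  obtain ⟨C, hC⟩ : ∃ C, ∀ p ∈ Icc (0:ℝ) l ×ˢ Icc (t - ε) (t + ε),
      ‖φx p.1 p.2 * φtx p.1 p.2 + deriv F (φ p.1 p.2) * φt p.1 p.2‖ ≤ C := by
    apply (isCompact_Icc.prod isCompact_Icc).exists_bound_of_continuousOn
    apply he'c.mono
    intro p hp
    refine ⟨hp.1, ⟨by linarith [hp.2.1], by linarith [hp.2.2]⟩⟩
  -- side conditions for dominated differentiation under the integral sign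
  have hmeas : ∀ᶠ τ in nhds t,
      MeasureTheory.AEStronglyMeasurable (fun x => 1 / 2 * (φx x τ) ^ 2 + F (φ x τ))
        (MeasureTheory.volume.restrict (Set.uIoc (0:ℝ) l)) := by
    filter_upwards [isOpen_Ioo.mem_nhds htI] with τ hτ
    have hc : ContinuousOn (fun x => 1 / 2 * (φx x τ) ^ 2 + F (φ x τ)) (Icc (0:ℝ) l) :=
      (continuousOn_const.mul ((slice hφxc τ hτ).pow 2)).add
        (hF.continuous.comp_continuousOn (slice hφc τ hτ))
    rw [hIoc]
    exact (hc.mono Ioc_subset_Icc_self).aestronglyMeasurable measurableSet_Ioc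
  have hint : IntervalIntegrable (fun x => 1 / 2 * (φx x t) ^ 2 + F (φ x t))
      MeasureTheory.volume 0 l :=
    hci ((continuousOn_const.mul ((slice hφxc t htI).pow 2)).add
      (hF.continuous.comp_continuousOn (slice hφc t htI)))
  have h'meas : MeasureTheory.AEStronglyMeasurable
      (fun x => φx x t * φtx x t + deriv F (φ x t) * φt x t)
      (MeasureTheory.volume.restrict (Set.uIoc (0:ℝ) l)) := by
    have hc : ContinuousOn (fun x => φx x t * φtx x t + deriv F (φ x t) * φt x t)
        (Icc (0:ℝ) l) :=
      ((slice hφxc t htI).mul (slice hφtxc t htI)).add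
        ((hFd.comp_continuousOn (slice hφc t htI)).mul (slice hφtc t htI))
    rw [hIoc]
    exact (hc.mono Ioc_subset_Icc_self).aestronglyMeasurable measurableSet_Ioc
  have hbound : ∀ᵐ x ∂(MeasureTheory.volume : MeasureTheory.Measure ℝ), x ∈ Set.uIoc (0:ℝ) l →
      ∀ τ ∈ Metric.ball t ε,
        ‖φx x τ * φtx x τ + deriv F (φ x τ) * φt x τ‖ ≤ C := by
    apply Filter.Eventually.of_forall
    intro x hx τ hτ
    rw [hIoc] at hx
    have hτ' := Metric.mem_ball.1 hτ
    rw [Real.dist_eq, abs_lt] at hτ'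
    exact hC (x, τ) ⟨Ioc_subset_Icc_self hx, ⟨by linarith [hτ'.1], by linarith [hτ'.2]⟩⟩
  have hdiff : ∀ᵐ x ∂(MeasureTheory.volume : MeasureTheory.Measure ℝ), x ∈ Set.uIoc (0:ℝ) l →
      ∀ τ ∈ Metric.ball t ε,
        HasDerivAt (fun τ => 1 / 2 * (φx x τ) ^ 2 + F (φ x τ))
          (φx x τ * φtx x τ + deriv F (φ x τ) * φt x τ) τ := by
    apply Filter.Eventually.of_forall
    intro x hx τ hτ
    rw [hIoc] at hx
    have hxI : x ∈ Icc (0:ℝ) l := Ioc_subset_Icc_self hx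
    have hτI : τ ∈ Ioo (0:ℝ) T := hball hτ
    have h1 : HasDerivAt (fun τ => 1 / 2 * (φx x τ) ^ 2)
        (1 / 2 * (2 * φx x τ ^ 1 * φtx x τ)) τ :=
      ((hφtx x hxI τ hτI).pow 2).const_mul (1 / 2 : ℝ)
    have h2 : HasDerivAt (fun τ => F (φ x τ)) (deriv F (φ x τ) * φt x τ) τ :=
      HasDerivAt.comp τ ((hF.differentiable one_ne_zero (φ x τ)).hasDerivAt) (hφt x hxI τ hτI)
    have := h1.add h2
    exact this.congr_deriv (by ring)
  have key := (intervalIntegral.hasDerivAt_integral_of_dominated_loc_of_deriv_le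
      (F := fun τ x => 1 / 2 * (φx x τ) ^ 2 + F (φ x τ))
      (F' := fun τ x => φx x τ * φtx x τ + deriv F (φ x τ) * φt x τ)
      (bound := fun _ => C) (μ := MeasureTheory.volume) (a := 0) (b := l) (x₀ := t)
      (Metric.ball_mem_nhds t hε) hmeas hint h'meas hbound intervalIntegrable_const hdiff).2
  -- boundary G terms
  have hG0 : HasDerivAt (fun τ => G (φ 0 τ)) (deriv G (φ 0 t) * φt 0 t) t :=
    HasDerivAt.comp t ((hG.differentiable one_ne_zero (φ 0 t)).hasDerivAt) (hφt 0 h0m t htI)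
  have hGl : HasDerivAt (fun τ => G (φ l τ)) (deriv G (φ l t) * φt l t) t :=
    HasDerivAt.comp t ((hG.differentiable one_ne_zero (φ l t)).hasDerivAt) (hφt l hlm t htI)
  have total := (key.add hG0).add hGl
  -- integrability of pieces at time t
  have sA : IntervalIntegrable (fun x => φxx x t * φt x t) MeasureTheory.volume 0 l :=
    hci ((slice hφxxc t htI).mul (slice hφtc t htI))
  have sB : IntervalIntegrable (fun x => φx x t * φtx x t) MeasureTheory.volume 0 l :=
    hci ((slice hφxc t htI).mul (slice hφtxc t htI))
  have cM : ContinuousOn (fun x => -φxx x t + deriv F (φ x t)) (Icc (0:ℝ) l) :=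
    (slice hφxxc t htI).neg.add (hFd.comp_continuousOn (slice hφc t htI))
  have sMφt : IntervalIntegrable (fun x => (-φxx x t + deriv F (φ x t)) * φt x t)
      MeasureTheory.volume 0 l := hci (cM.mul (slice hφtc t htI))
  have sM2 : IntervalIntegrable (fun x => (μx x t) ^ 2) MeasureTheory.volume 0 l :=
    hci ((slice hμxc t htI).pow 2)
  have sMμ : IntervalIntegrable (fun x => (-φxx x t + deriv F (φ x t)) * μxx x t)
      MeasureTheory.volume 0 l := hci (cM.mul (slice hμxxc t htI))
  -- integration by parts 1
  have i1 : (∫ x in (0:ℝ)..l, (φxx x t * φt x t + φx x t * φtx x t)) =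
      φx l t * φt l t - φx 0 t * φt 0 t := by
    apply intervalIntegral.integral_eq_sub_of_hasDerivAt
    · intro x hx
      rw [hIcc] at hx
      exact (hφxx x hx t htI).mul (hφxt x hx t htI)
    · exact sA.add sB
  -- integration by parts 2
  have i2 : (∫ x in (0:ℝ)..l, ((μx x t) ^ 2 + (-φxx x t + deriv F (φ x t)) * μxx x t)) =
      (-φxx l t + deriv F (φ l t)) * μx l t - (-φxx 0 t + deriv F (φ 0 t)) * μx 0 t := by
    apply intervalIntegral.integral_eq_sub_of_hasDerivAt
    · intro x hx
      rw [hIcc] at hx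
      have := (hμx x hx t htI).mul (hμxx x hx t htI)
      exact this.congr_deriv (by ring)
    · exact sM2.add sMμ
  have i2' : (∫ x in (0:ℝ)..l, ((μx x t) ^ 2 + (-φxx x t + deriv F (φ x t)) * μxx x t)) = 0 := by
    rw [i2, (hbcflux t htI).1, (hbcflux t htI).2]
    ring
  -- splitting the integral of the density derivative
  have e1 : (∫ x in (0:ℝ)..l, (φx x t * φtx x t + deriv F (φ x t) * φt x t)) =
      (∫ x in (0:ℝ)..l, (φxx x t * φt x t + φx x t * φtx x t)) +
      (∫ x in (0:ℝ)..l, ((-φxx x t + deriv F (φ x t)) * φt x t)) := by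
    rw [← intervalIntegral.integral_add (sA.add sB) sMφt]
    apply intervalIntegral.integral_congr
    intro x _
    ring
  have e2 : (∫ x in (0:ℝ)..l, ((-φxx x t + deriv F (φ x t)) * φt x t)) =
      (∫ x in (0:ℝ)..l, ((-φxx x t + deriv F (φ x t)) * μxx x t)) := by
    apply intervalIntegral.integral_congr
    rw [hIcc]
    intro x hx
    simp only [hpde x hx t htI]
  have e3 : (∫ x in (0:ℝ)..l, ((-φxx x t + deriv F (φ x t)) * μxx x t)) =
      -(∫ x in (0:ℝ)..l, (μx x t) ^ 2) := by
    have := intervalIntegral.integral_add sM2 sMμ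
    rw [i2'] at this
    linarith
  -- boundary algebra
  have b0 := hbcdyn0 t htI
  have bl := hbcdynl t htI
  have final : (∫ x in (0:ℝ)..l, (φx x t * φtx x t + deriv F (φ x t) * φt x t)) +
      deriv G (φ 0 t) * φt 0 t + deriv G (φ l t) * φt l t =
      -(∫ x in (0:ℝ)..l, (μx x t) ^ 2) - (1 / Γs) * ((φt 0 t) ^ 2 + (φt l t) ^ 2) := by
    rw [e1, e2, e3, i1]
    linear_combination (φt 0 t) * b0 + (φt l t) * bl
  rw [← final]
  exact total
end

section
/- Let l > 0, T > 0, b > 0, c ≥ 0, and let φ, μ : [0,l] × (0,T) → ℝ be such that φ, ∂_t φ, μ, ∂_x μ, ∂_x² μ exist and are jointly continuous on [0,l] × (0,T). Assume ∂_t φ = ∂_x² μ on [0,l] × (0,T), together with the dynamic (Wentzell type) boundary conditions ∂_t φ(0,t) - b ∂_x μ(0,t) + c μ(0,t) = 0 and ∂_t φ(l,t) + b ∂_x μ(l,t) + c μ(l,t) = 0 for all t ∈ (0,T). Then for every t ∈ (0,T) the total mass m(t) = ∫₀^l φ(x,t) dx + (φ(0,t) + φ(l,t))/b is differentiable with d/dt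 m(t) = -(c/b)(μ(0,t) + μ(l,t)); in particular, if c = 0 then the total mass ∫₀^l φ(x,t) dx + (φ(0,t) + φ(l,t))/b is constant on (0,T). -/
open Set

/-- Total mass balance for the one-dimensional Cahn–Hilliard equation `∂_t φ = ∂_x² μ`
on `Ω = (0,l)` with the dynamic (Wentzell type) boundary condition
`∂_t φ + b ∂_n μ + c μ = 0` (the outward normal derivative `∂_n` being `-∂_x` at `x = 0`
and `+∂_x` at `x = l`): the total mass `m(t) = ∫₀^l φ(x,t) dx + (φ(0,t) + φ(l,t))/b`
satisfies `m'(t) = -(c/b)(μ(0,t) + μ(l,t))`; in particular, if `c = 0` then the total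
mass is constant on `(0,T)`. Here `φt, μx, μxx` denote `∂_t φ, ∂_x μ, ∂_x² μ`, and
`φ, ∂_t φ, μ, ∂_x μ, ∂_x² μ` are jointly continuous on `[0,l] × (0,T)`. -/
theorem stmt17 (l T b c : ℝ) (hl : 0 < l) (hT : 0 < T) (hb : 0 < b) (hc : 0 ≤ c)
    (φ μ φt μx μxx : ℝ → ℝ → ℝ)
    (hφt : ∀ x ∈ Icc (0 : ℝ) l, ∀ t ∈ Ioo (0 : ℝ) T,
      HasDerivAt (fun τ => φ x τ) (φt x t) t)
    (hμx : ∀ x ∈ Icc (0 : ℝ) l, ∀ t ∈ Ioo (0 : ℝ) T,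
      HasDerivAt (fun y => μ y t) (μx x t) x)
    (hμxx : ∀ x ∈ Icc (0 : ℝ) l, ∀ t ∈ Ioo (0 : ℝ) T,
      HasDerivAt (fun y => μx y t) (μxx x t) x)
    (hφc : ContinuousOn (fun p : ℝ × ℝ => φ p.1 p.2) (Icc (0 : ℝ) l ×ˢ Ioo (0 : ℝ) T))
    (hφtc : ContinuousOn (fun p : ℝ × ℝ => φt p.1 p.2) (Icc (0 : ℝ) l ×ˢ Ioo (0 : ℝ) T))
    (hμc : ContinuousOn (fun p : ℝ × ℝ => μ p.1 p.2) (Icc (0 : ℝ) l ×ˢ Ioo (0 : ℝ) T))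
    (hμxc : ContinuousOn (fun p : ℝ × ℝ => μx p.1 p.2) (Icc (0 : ℝ) l ×ˢ Ioo (0 : ℝ) T))
    (hμxxc : ContinuousOn (fun p : ℝ × ℝ => μxx p.1 p.2) (Icc (0 : ℝ) l ×ˢ Ioo (0 : ℝ) T))
    (hpde : ∀ x ∈ Icc (0 : ℝ) l, ∀ t ∈ Ioo (0 : ℝ) T, φt x t = μxx x t)
    (hbc0 : ∀ t ∈ Ioo (0 : ℝ) T, φt 0 t - b * μx 0 t + c * μ 0 t = 0)
    (hbcl : ∀ t ∈ Ioo (0 : ℝ) T, φt l t + b * μx l t + c * μ l t = 0) :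
    (∀ t ∈ Ioo (0 : ℝ) T,
      HasDerivAt (fun τ => (∫ x in (0 : ℝ)..l, φ x τ) + (φ 0 τ + φ l τ) / b)
        (-(c / b) * (μ 0 t + μ l t)) t) ∧
    (c = 0 → ∀ t₁ ∈ Ioo (0 : ℝ) T, ∀ t₂ ∈ Ioo (0 : ℝ) T,
      (∫ x in (0 : ℝ)..l, φ x t₁) + (φ 0 t₁ + φ l t₁) / b =
        (∫ x in (0 : ℝ)..l, φ x t₂) + (φ 0 t₂ + φ l t₂) / b) := by
  have h0l : (0 : ℝ) ∈ Icc (0 : ℝ) l := ⟨le_refl _, hl.le⟩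
  have hll : l ∈ Icc (0 : ℝ) l := ⟨hl.le, le_refl _⟩
  have huIcc : uIcc (0 : ℝ) l = Icc 0 l := uIcc_of_le hl.le
  -- main derivative claim
  have main : ∀ t ∈ Ioo (0 : ℝ) T,
      HasDerivAt (fun τ => (∫ x in (0 : ℝ)..l, φ x τ) + (φ 0 τ + φ l τ) / b)
        (-(c / b) * (μ 0 t + μ l t)) t := by
    intro t ht
    obtain ⟨ht0, htT⟩ := ht
    have hsec : ∀ (f : ℝ → ℝ → ℝ),
        ContinuousOn (fun p : ℝ × ℝ => f p.1 p.2) (Icc (0:ℝ) l ×ˢ Ioo (0:ℝ) T) →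
        ∀ τ ∈ Ioo (0:ℝ) T, ContinuousOn (fun x => f x τ) (Icc (0:ℝ) l) := by
      intro f hf τ hτ
      have hmap : ContinuousOn (fun x : ℝ => ((x, τ) : ℝ × ℝ)) (Icc (0:ℝ) l) :=
        (continuous_id.prodMk continuous_const).continuousOn
      exact hf.comp hmap (fun x hx => ⟨hx, hτ⟩)
    set ε : ℝ := min t (T - t) / 2 with hε
    have hεpos : 0 < ε := by
      have : 0 < min t (T - t) := lt_min ht0 (by linarith)
      simpa [hε] using half_pos this
    have hball : Metric.ball t ε ⊆ Ioo 0 T := by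
      intro τ hτ
      rw [Metric.mem_ball, Real.dist_eq, abs_lt] at hτ
      constructor
      · nlinarith [min_le_left t (T - t), min_le_right t (T - t)]
      · nlinarith [min_le_left t (T - t), min_le_right t (T - t)]
    -- bound for φt on a compact neighborhood
    have hKsub : Icc (0:ℝ) l ×ˢ Icc (t - ε/2) (t + ε/2) ⊆ Icc (0:ℝ) l ×ˢ Ioo (0:ℝ) T := by
      apply prod_mono_right
      intro τ hτ
      apply hball
      rw [Metric.mem_ball, Real.dist_eq, abs_lt]
      constructor <;> [linarith [hτ.1]; linarith [hτ.2]]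
    have hKc : IsCompact (Icc (0:ℝ) l ×ˢ Icc (t - ε/2) (t + ε/2)) :=
      isCompact_Icc.prod isCompact_Icc
    obtain ⟨M, hM⟩ := hKc.exists_bound_of_continuousOn (hφtc.mono hKsub)
    -- derivative of the integral term
    have hint : HasDerivAt (fun τ => ∫ x in (0:ℝ)..l, φ x τ)
        (∫ x in (0:ℝ)..l, φt x t) t := by
      have := intervalIntegral.hasDerivAt_integral_of_dominated_loc_of_deriv_le
        (F := fun τ x => φ x τ) (F' := fun τ x => φt x τ) (x₀ := t) (a := 0) (b := l)
        (bound := fun _ => M) (μ := MeasureTheory.volume) (Metric.ball_mem_nhds t (show 0 < ε/2 by positivity))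
        ?_ ?_ ?_ ?_ ?_ ?_
      · exact this.2
      · filter_upwards [isOpen_Ioo.mem_nhds ⟨ht0, htT⟩] with τ hτ
        exact ((hsec φ hφc τ hτ).mono (by rw [uIoc_of_le hl.le]; exact Ioc_subset_Icc_self)).aestronglyMeasurable
          measurableSet_uIoc
      · apply ContinuousOn.intervalIntegrable
        rw [huIcc]
        exact hsec φ hφc t ⟨ht0, htT⟩
      · exact ((hsec φt hφtc t ⟨ht0, htT⟩).mono
          (by rw [uIoc_of_le hl.le]; exact Ioc_subset_Icc_self)).aestronglyMeasurable
          measurableSet_uIoc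
      · apply MeasureTheory.ae_of_all
        intro x hx τ hτ
        have hx' : x ∈ Icc (0:ℝ) l := by
          rw [uIoc_of_le hl.le] at hx; exact Ioc_subset_Icc_self hx
        have hτ' : τ ∈ Icc (t - ε/2) (t + ε/2) := by
          rw [Metric.mem_ball, Real.dist_eq, abs_lt] at hτ
          constructor <;> [linarith [hτ.1]; linarith [hτ.2]]
        exact hM (x, τ) ⟨hx', hτ'⟩
      · exact intervalIntegrable_const
      · apply MeasureTheory.ae_of_all
        intro x hx τ hτ
        have hx' : x ∈ Icc (0:ℝ) l := by
          rw [uIoc_of_le hl.le] at hx; exact Ioc_subset_Icc_self hx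
        have hτ' : τ ∈ Ioo (0:ℝ) T := hball (Metric.ball_subset_ball (by linarith) hτ)
        exact hφt x hx' τ hτ'
    -- evaluate the integral of φt
    have hval : (∫ x in (0:ℝ)..l, φt x t) = μx l t - μx 0 t := by
      have h1 : (∫ x in (0:ℝ)..l, φt x t) = ∫ x in (0:ℝ)..l, μxx x t := by
        apply intervalIntegral.integral_congr
        intro x hx
        rw [huIcc] at hx
        exact hpde x hx t ⟨ht0, htT⟩
      rw [h1]
      apply intervalIntegral.integral_eq_sub_of_hasDerivAt
      · intro x hx
        rw [huIcc] at hx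
        exact hμxx x hx t ⟨ht0, htT⟩
      · apply ContinuousOn.intervalIntegrable
        rw [huIcc]
        exact hsec μxx hμxxc t ⟨ht0, htT⟩
    -- derivative of boundary terms
    have hbd : HasDerivAt (fun τ => (φ 0 τ + φ l τ) / b) ((φt 0 t + φt l t) / b) t :=
      ((hφt 0 h0l t ⟨ht0, htT⟩).add (hφt l hll t ⟨ht0, htT⟩)).div_const b
    have htotal := hint.add hbd
    have heq : (∫ x in (0:ℝ)..l, φt x t) + (φt 0 t + φt l t) / b
        = -(c / b) * (μ 0 t + μ l t) := by
      rw [hval]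
      have h0 := hbc0 t ⟨ht0, htT⟩
      have hLl := hbcl t ⟨ht0, htT⟩
      field_simp
      nlinarith [h0, hLl]
    rwa [heq] at htotal
  refine ⟨main, ?_⟩
  intro hc0 t₁ ht₁ t₂ ht₂
  have := (convex_Ioo (0:ℝ) T).is_const_of_fderivWithin_eq_zero
    (f := fun τ => (∫ x in (0 : ℝ)..l, φ x τ) + (φ 0 τ + φ l τ) / b)
    (fun t ht => by
      have h := main t ht
      rw [hc0] at h
      simpa using h.differentiableAt.differentiableWithinAt)
    (fun t ht => by
      have h := main t ht
      rw [hc0] at h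
      simp only [neg_zero, zero_div, zero_mul, neg_mul] at h
      rw [fderivWithin_of_mem_nhds (isOpen_Ioo.mem_nhds ht)]
      have := h.hasFDerivAt.fderiv
      rw [this]
      ext y
      simp) ht₁ ht₂
  exact this
end

section
/- Let l > 0, T > 0, b > 0, let F, G : ℝ → ℝ be continuously differentiable, and let φ : [0,l] × (0,T) → ℝ be such that φ, ∂_t φ, ∂_x φ, ∂_x² φ, ∂_t ∂_x φ = ∂_x ∂_t φ exist and are jointly continuous, and such that, writing μ := -∂_x² φ + F'(φ), also ∂_x μ and ∂_x² μ exist and are jointly continuous on [0,l] × (0,T). Assume ∂_t φ = ∂_x² μ on [0,l] × (0,T), together with the boundary conditions ∂_t φ(0,t) - b ∂_x μ(0,t) = 0, ∂_t φ(l,t) + b ∂_x μ(l,t) = 0, μ(0,t)/b = -∂_x φ(0,t) + G'(φ(0,t)) and μ(l,t)/b = ∂_x φ(l,t) + G'(φ(l,t)) for all t ∈ (0,T). Then for every t ∈ (0,T) the total energy E(t) = ∫₀^l [(1/2)(∂_x φ(x,t))² + F(φ(x,t))] dx + G(φ(0,t)) + G(φ(l,t)) is differentiable in t with d/dt E(t)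 = -∫₀^l (∂_x μ(x,t))² dx. -/
open Set

/-- Energy dissipation law for the one-dimensional Cahn–Hilliard equation `∂_t φ = ∂_x² μ`,
`μ = -∂_x² φ + F'(φ)` on `Ω = (0,l)` with the Cahn–Hilliard type dynamic boundary
conditions `∂_t φ + b ∂_n μ = 0` and `μ/b = ∂_n φ + G'(φ)` (the case `σ = 0`, `c = 0`,
`κ = 0` for non-permeable walls; the outward normal derivative `∂_n` is `-∂_x` at `x = 0`
and `+∂_x` at `x = l`): the total free energy
`E(t) = ∫₀^l (1/2)(∂_x φ)² + F(φ) dx + G(φ(0,t)) + G(φ(l,t))` satisfies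
`E'(t) = -∫₀^l (∂_x μ)² dx`. Here `φt, φx, φxx, φtx, μx, μxx` denote
`∂_t φ, ∂_x φ, ∂_x² φ, ∂_t ∂_x φ = ∂_x ∂_t φ, ∂_x μ, ∂_x² μ`, all jointly continuous on
`[0,l] × (0,T)`, and `μ = -φxx + F'(φ)`. -/
theorem stmt18 (l T b : ℝ) (hl : 0 < l) (hT : 0 < T) (hb : 0 < b)
    (F G : ℝ → ℝ) (hF : ContDiff ℝ 1 F) (hG : ContDiff ℝ 1 G)
    (φ φt φx φxx φtx μx μxx : ℝ → ℝ → ℝ)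
    (hφt : ∀ x ∈ Icc (0 : ℝ) l, ∀ t ∈ Ioo (0 : ℝ) T,
      HasDerivAt (fun τ => φ x τ) (φt x t) t)
    (hφx : ∀ x ∈ Icc (0 : ℝ) l, ∀ t ∈ Ioo (0 : ℝ) T,
      HasDerivAt (fun y => φ y t) (φx x t) x)
    (hφxx : ∀ x ∈ Icc (0 : ℝ) l, ∀ t ∈ Ioo (0 : ℝ) T,
      HasDerivAt (fun y => φx y t) (φxx x t) x)
    (hφtx : ∀ x ∈ Icc (0 : ℝ) l, ∀ t ∈ Ioo (0 : ℝ) T,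
      HasDerivAt (fun τ => φx x τ) (φtx x t) t)
    (hφxt : ∀ x ∈ Icc (0 : ℝ) l, ∀ t ∈ Ioo (0 : ℝ) T,
      HasDerivAt (fun y => φt y t) (φtx x t) x)
    (hμx : ∀ x ∈ Icc (0 : ℝ) l, ∀ t ∈ Ioo (0 : ℝ) T,
      HasDerivAt (fun y => -φxx y t + deriv F (φ y t)) (μx x t) x)
    (hμxx : ∀ x ∈ Icc (0 : ℝ) l, ∀ t ∈ Ioo (0 : ℝ) T,
      HasDerivAt (fun y => μx y t) (μxx x t) x)
    (hφc : ContinuousOn (fun p : ℝ × ℝ => φ p.1 p.2) (Icc (0 : ℝ) l ×ˢ Ioo (0 : ℝ) T))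
    (hφtc : ContinuousOn (fun p : ℝ × ℝ => φt p.1 p.2) (Icc (0 : ℝ) l ×ˢ Ioo (0 : ℝ) T))
    (hφxc : ContinuousOn (fun p : ℝ × ℝ => φx p.1 p.2) (Icc (0 : ℝ) l ×ˢ Ioo (0 : ℝ) T))
    (hφxxc : ContinuousOn (fun p : ℝ × ℝ => φxx p.1 p.2) (Icc (0 : ℝ) l ×ˢ Ioo (0 : ℝ) T))
    (hφtxc : ContinuousOn (fun p : ℝ × ℝ => φtx p.1 p.2) (Icc (0 : ℝ) l ×ˢ Ioo (0 : ℝ) T))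
    (hμxc : ContinuousOn (fun p : ℝ × ℝ => μx p.1 p.2) (Icc (0 : ℝ) l ×ˢ Ioo (0 : ℝ) T))
    (hμxxc : ContinuousOn (fun p : ℝ × ℝ => μxx p.1 p.2) (Icc (0 : ℝ) l ×ˢ Ioo (0 : ℝ) T))
    (hpde : ∀ x ∈ Icc (0 : ℝ) l, ∀ t ∈ Ioo (0 : ℝ) T, φt x t = μxx x t)
    (hbc0 : ∀ t ∈ Ioo (0 : ℝ) T, φt 0 t - b * μx 0 t = 0)
    (hbcl : ∀ t ∈ Ioo (0 : ℝ) T, φt l t + b * μx l t = 0)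
    (hbcμ0 : ∀ t ∈ Ioo (0 : ℝ) T,
      (-φxx 0 t + deriv F (φ 0 t)) / b = -φx 0 t + deriv G (φ 0 t))
    (hbcμl : ∀ t ∈ Ioo (0 : ℝ) T,
      (-φxx l t + deriv F (φ l t)) / b = φx l t + deriv G (φ l t)) :
    ∀ t ∈ Ioo (0 : ℝ) T,
      HasDerivAt
        (fun τ => (∫ x in (0 : ℝ)..l, (1 / 2 * (φx x τ) ^ 2 + F (φ x τ))) +
          G (φ 0 τ) + G (φ l τ))
        (-∫ x in (0 : ℝ)..l, (μx x t) ^ 2) t := by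
  intro t ht
  obtain ⟨ht0, htT⟩ := ht
  have ht' : t ∈ Ioo (0:ℝ) T := ⟨ht0, htT⟩
  set ε := min t (T - t) / 2 with hεdef
  have hεpos : 0 < ε := by
    have h1 : 0 < min t (T - t) := lt_min ht0 (by linarith)
    positivity
  have hε1 : ε ≤ t / 2 := by
    have := min_le_left t (T - t); rw [hεdef]; linarith
  have hε2 : ε ≤ (T - t) / 2 := by
    have := min_le_right t (T - t); rw [hεdef]; linarith
  have hIcc_sub : Icc (t - ε) (t + ε) ⊆ Ioo 0 T := by
    intro τ hτ
    obtain ⟨h1, h2⟩ := hτ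
    exact ⟨by linarith, by linarith⟩
  have hball : Metric.ball t ε ⊆ Icc (t - ε) (t + ε) := by
    intro τ hτ
    rw [Metric.mem_ball, Real.dist_eq] at hτ
    have := abs_lt.mp hτ
    exact ⟨by linarith [this.1], by linarith [this.2]⟩
  have hball' : Metric.ball t ε ⊆ Ioo 0 T := hball.trans hIcc_sub
  -- slice continuity
  have contSlice : ∀ (f : ℝ → ℝ → ℝ),
      ContinuousOn (fun p : ℝ × ℝ => f p.1 p.2) (Icc (0:ℝ) l ×ˢ Ioo (0:ℝ) T) →
      ∀ τ ∈ Ioo (0:ℝ) T, ContinuousOn (fun x => f x τ) (Icc (0:ℝ) l) := by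
    intro f hf τ hτ
    exact hf.comp (continuous_id.prodMk continuous_const).continuousOn
      (fun x hx => ⟨hx, hτ⟩)
  have cF' : Continuous (deriv F) := hF.continuous_deriv le_rfl
  have hIuIcc : uIcc (0:ℝ) l = Icc 0 l := uIcc_of_le hl.le
  have hIuIoc : uIoc (0:ℝ) l = Ioc 0 l := uIoc_of_le hl.le
  have hIsub : uIoc (0:ℝ) l ⊆ Icc 0 l := by rw [hIuIoc]; exact Ioc_subset_Icc_self
  -- joint continuity of the τ-derivative of the integrand
  have hcontH' : ContinuousOn
      (fun p : ℝ × ℝ => φx p.1 p.2 * φtx p.1 p.2 + deriv F (φ p.1 p.2) * φt p.1 p.2)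
      (Icc (0:ℝ) l ×ˢ Ioo (0:ℝ) T) :=
    (hφxc.mul hφtxc).add ((cF'.comp_continuousOn hφc).mul hφtc)
  -- bound on a compact slab
  have hK : IsCompact (Icc (0:ℝ) l ×ˢ Icc (t - ε) (t + ε)) :=
    isCompact_Icc.prod isCompact_Icc
  have hKsub : (Icc (0:ℝ) l ×ˢ Icc (t - ε) (t + ε)) ⊆ Icc (0:ℝ) l ×ˢ Ioo (0:ℝ) T :=
    Set.prod_mono_right hIcc_sub
  obtain ⟨C, hC⟩ := hK.exists_bound_of_continuousOn (hcontH'.mono hKsub)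
  -- interval integrability helpers
  have intSlice : ∀ (g : ℝ → ℝ), ContinuousOn g (Icc (0:ℝ) l) →
      IntervalIntegrable g MeasureTheory.volume 0 l := by
    intro g hg
    exact (hg.mono (by rw [hIuIcc])).intervalIntegrable
  -- measurability helper
  have measSlice : ∀ (g : ℝ → ℝ), ContinuousOn g (Icc (0:ℝ) l) →
      MeasureTheory.AEStronglyMeasurable g (MeasureTheory.volume.restrict (uIoc (0:ℝ) l)) := by
    intro g hg
    exact (hg.mono hIsub).aestronglyMeasurable measurableSet_uIoc
  -- differentiability of the integral term
  have h1 : HasDerivAt (fun τ => ∫ x in (0:ℝ)..l, (1 / 2 * (φx x τ) ^ 2 + F (φ x τ)))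
      (∫ x in (0:ℝ)..l, (φx x t * φtx x t + deriv F (φ x t) * φt x t)) t := by
    refine (intervalIntegral.hasDerivAt_integral_of_dominated_loc_of_deriv_le
      (F := fun τ x => 1 / 2 * (φx x τ) ^ 2 + F (φ x τ))
      (F' := fun τ x => φx x τ * φtx x τ + deriv F (φ x τ) * φt x τ)
      (bound := fun _ => C) (Metric.ball_mem_nhds t hεpos) ?_ ?_ ?_ ?_ ?_ ?_).2
    · filter_upwards [Metric.ball_mem_nhds t hεpos] with τ hτ
      have hτ' := hball' hτ
      refine measSlice _ ?_
      exact ((contSlice _ hφxc τ hτ').pow 2).const_smul (1/2 : ℝ) |>.add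
        (hF.continuous.comp_continuousOn (contSlice _ hφc τ hτ'))
    · refine intSlice _ ?_
      exact (((contSlice _ hφxc t ht').pow 2).const_smul (1/2 : ℝ)).add
        (hF.continuous.comp_continuousOn (contSlice _ hφc t ht'))
    · refine measSlice _ ?_
      exact ((contSlice _ hφxc t ht').mul (contSlice _ hφtxc t ht')).add
        ((cF'.comp_continuousOn (contSlice _ hφc t ht')).mul (contSlice _ hφtc t ht'))
    · refine Filter.Eventually.of_forall fun x hx τ hτ => ?_
      exact hC (x, τ) ⟨hIsub hx, hball hτ⟩
    · exact intervalIntegrable_const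
    · refine Filter.Eventually.of_forall fun x hx τ hτ => ?_
      have hxI := hIsub hx
      have hτI := hball' hτ
      have d1 : HasDerivAt (fun τ => 1 / 2 * (φx x τ) ^ 2)
          (φx x τ * φtx x τ) τ := by
        have := ((hφtx x hxI τ hτI).pow 2).const_mul (1/2 : ℝ)
        refine this.congr_deriv ?_
        ring
      have d2 : HasDerivAt (fun τ => F (φ x τ)) (deriv F (φ x τ) * φt x τ) τ :=
        (((hF.differentiable one_ne_zero) (φ x τ)).hasDerivAt).comp τ (hφt x hxI τ hτI)
      exact d1.add d2
  -- differentiability of the boundary energy terms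
  have h2 : HasDerivAt (fun τ => G (φ 0 τ)) (deriv G (φ 0 t) * φt 0 t) t :=
    (((hG.differentiable one_ne_zero) (φ 0 t)).hasDerivAt).comp t
      (hφt 0 (by constructor <;> [rfl; exact hl.le]) t ht')
  have h3 : HasDerivAt (fun τ => G (φ l τ)) (deriv G (φ l t) * φt l t) t :=
    (((hG.differentiable one_ne_zero) (φ l t)).hasDerivAt).comp t
      (hφt l ⟨hl.le, le_rfl⟩ t ht')
  -- integration by parts identity
  have hA : ∀ x ∈ Icc (0:ℝ) l, HasDerivAt
      (fun y => φx y t * φt y t + (-φxx y t + deriv F (φ y t)) * μx y t)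
      ((φx x t * φtx x t + deriv F (φ x t) * φt x t) + μx x t ^ 2) x := by
    intro x hx
    have d1 := (hφxx x hx t ht').mul (hφxt x hx t ht')
    have d2 := (hμx x hx t ht').mul (hμxx x hx t ht')
    have hsum := d1.add d2
    refine hsum.congr_deriv ?_
    have hp := hpde x hx t ht'
    rw [hp]; ring
  have hintH' : IntervalIntegrable
      (fun x => φx x t * φtx x t + deriv F (φ x t) * φt x t) MeasureTheory.volume 0 l := by
    refine intSlice _ ?_
    exact ((contSlice _ hφxc t ht').mul (contSlice _ hφtxc t ht')).add
      ((cF'.comp_continuousOn (contSlice _ hφc t ht')).mul (contSlice _ hφtc t ht'))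
  have hintμx2 : IntervalIntegrable (fun x => μx x t ^ 2) MeasureTheory.volume 0 l := by
    refine intSlice _ ?_
    exact (contSlice _ hμxc t ht').pow 2
  have hibp : (∫ x in (0:ℝ)..l,
      ((φx x t * φtx x t + deriv F (φ x t) * φt x t) + μx x t ^ 2)) =
      (φx l t * φt l t + (-φxx l t + deriv F (φ l t)) * μx l t) -
      (φx 0 t * φt 0 t + (-φxx 0 t + deriv F (φ 0 t)) * μx 0 t) := by
    refine intervalIntegral.integral_eq_sub_of_hasDerivAt
      (fun x hx => hA x (by rwa [hIuIcc] at hx)) ?_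
    exact hintH'.add hintμx2
  have hsplit : (∫ x in (0:ℝ)..l,
      ((φx x t * φtx x t + deriv F (φ x t) * φt x t) + μx x t ^ 2)) =
      (∫ x in (0:ℝ)..l, (φx x t * φtx x t + deriv F (φ x t) * φt x t)) +
      ∫ x in (0:ℝ)..l, μx x t ^ 2 :=
    intervalIntegral.integral_add hintH' hintμx2
  have hI : (∫ x in (0:ℝ)..l, (φx x t * φtx x t + deriv F (φ x t) * φt x t)) =
      (φx l t * φt l t + (-φxx l t + deriv F (φ l t)) * μx l t) -
      (φx 0 t * φt 0 t + (-φxx 0 t + deriv F (φ 0 t)) * μx 0 t) -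
      ∫ x in (0:ℝ)..l, μx x t ^ 2 := by
    rw [hsplit] at hibp; linarith
  -- boundary conditions
  have e0 : φt 0 t = b * μx 0 t := by have := hbc0 t ht'; linarith
  have el : φt l t = -(b * μx l t) := by have := hbcl t ht'; linarith
  have m0 : -φxx 0 t + deriv F (φ 0 t) = (-φx 0 t + deriv G (φ 0 t)) * b :=
    (div_eq_iff hb.ne').mp (hbcμ0 t ht')
  have ml : -φxx l t + deriv F (φ l t) = (φx l t + deriv G (φ l t)) * b :=
    (div_eq_iff hb.ne').mp (hbcμl t ht')
  have hsum := (h1.add h2).add h3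
  refine hsum.congr_deriv ?_
  rw [hI, m0, ml, e0, el]
  ring
end
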